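/- Let S be a complete separable metric space, let f ∈ F₁(a,b) be admissible and strictly admissible, let Γ ⊂ C_b(S) be admissible, and let Q, P be Borel probability measures on S. For δ > 0 let Γ_δ = {δ·g : g ∈ Γ}. Then lim_{δ↓0} (1/δ)·D_f^{Γ_δ}(Q‖P) = W^Γ(Q,P). -/

import Mathlib

open MeasureTheory Filter Set Topology ENNReal
open scoped Classical

noncomputable section

/-- The set of bounded measurable real-valued functions on `Ω`. -/
def Mb (Ω : Type*) [MeasurableSpace Ω] : Set (Ω → ℝ) :=
  {g | Measurable g ∧ ∃ C : ℝ, ∀ x, |g x| ≤ C}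

/-- The set of bounded continuous real-valued functions on `S`. -/
def Cb (S : Type*) [TopologicalSpace S] : Set (S → ℝ) :=
  {g | Continuous g ∧ ∃ C : ℝ, ∀ x, |g x| ≤ C}

/-- The positive part of an extended real number, as an element of `ℝ≥0∞`. -/
def posE (x : EReal) : ℝ≥0∞ := if x = ⊤ then ⊤ else ENNReal.ofReal x.toReal

/-- The extended-real-valued integral of an `EReal`-valued function, defined as the
difference of the lower integrals of the positive and negative parts, with the
convention `∞ - ∞ = -∞`. -/
def eIntegral {Ω : Type*} [MeasurableSpace Ω] (P : Measure Ω) (h : Ω → EReal) : EReal :=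
  ((∫⁻ x, posE (h x) ∂P : ℝ≥0∞) : EReal) - ((∫⁻ x, posE (-(h x)) ∂P : ℝ≥0∞) : EReal)

/-- The Legendre transform `f*(y) = sup_x {x*y - f(x)}` of `f : ℝ → (-∞,∞]`. -/
def fstar (f : ℝ → EReal) (y : ℝ) : EReal := ⨆ x : ℝ, (((x * y : ℝ) : EReal) - f x)

/-- `f : ℝ → (-∞,∞]` is (the convex LSC extension of) an element of `F₁(a,b)`:
convex, lower semicontinuous, never `-∞`, finite exactly on the interval `(a,b)`
(with `+∞` strictly outside `[a,b]`), and `f(1) = 0` with `a < 1 < b`. -/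
structure IsF1 (a b : EReal) (f : ℝ → EReal) : Prop where
  a_lt_one : a < ((1 : ℝ) : EReal)
  one_lt_b : ((1 : ℝ) : EReal) < b
  convex : ∀ x y t : ℝ, 0 < t → t < 1 →
    f (t * x + (1 - t) * y) ≤ ((t : ℝ) : EReal) * f x + (((1 - t : ℝ)) : EReal) * f y
  lsc : LowerSemicontinuous f
  ne_bot : ∀ x, f x ≠ ⊥
  finite_on : ∀ x : ℝ, a < (x : EReal) → (x : EReal) < b → f x ≠ ⊤
  top_outside : ∀ x : ℝ, ((x : EReal) < a ∨ b < (x : EReal)) → f x = ⊤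
  at_one : f 1 = 0

/-- `Λ_f^P[g] = inf_{ν ∈ ℝ} {ν + E_P[f*(g - ν)]}`. -/
def LambdaF {Ω : Type*} [MeasurableSpace Ω] (f : ℝ → EReal) (P : Measure Ω) (g : Ω → ℝ) :
    EReal :=
  ⨅ ν : ℝ, ((ν : EReal) + eIntegral P (fun x => fstar f (g x - ν)))

/-- The classical `f`-divergence `D_f(Q‖P) = E_P[f(dQ/dP)]` if `Q ≪ P`, else `∞`. -/
def fDivE {Ω : Type*} [MeasurableSpace Ω] (f : ℝ → EReal) (Q P : Measure Ω) : EReal :=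
  if Q ≪ P then eIntegral P (fun x => f ((Q.rnDeriv P x).toReal)) else ⊤

/-- The `(f,Γ)`-divergence `D_f^Γ(Q‖P) = sup_{g ∈ Γ} {E_Q[g] - Λ_f^P[g]}`. -/
def fGammaDiv {Ω : Type*} [MeasurableSpace Ω] (f : ℝ → EReal) (Γ : Set (Ω → ℝ))
    (Q P : Measure Ω) : EReal :=
  ⨆ g ∈ Γ, (((∫ x, g x ∂Q : ℝ) : EReal) - LambdaF f P g)

/-- The `Γ`-IPM `W^Γ(Q,P) = sup_{g ∈ Γ} {E_Q[g] - E_P[g]}`. -/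
def ipmW {Ω : Type*} [MeasurableSpace Ω] (Γ : Set (Ω → ℝ)) (Q P : Measure Ω) : EReal :=
  ⨆ g ∈ Γ, (((∫ x, g x ∂Q : ℝ) : EReal) - ((∫ x, g x ∂P : ℝ) : EReal))


/-- Integration of a function against a finite signed measure, via the Jordan
decomposition. -/
def signedIntegral {S : Type*} [MeasurableSpace S] (μ : MeasureTheory.SignedMeasure S)
    (g : S → ℝ) : ℝ :=
  (∫ x, g x ∂μ.toJordanDecomposition.posPart) - ∫ x, g x ∂μ.toJordanDecomposition.negPart

/-- The weak topology on real-valued functions on `S` generated by the maps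
`g ↦ ∫ g dμ` for all finite signed (Borel) measures `μ` on `S`. -/
def weakTop (S : Type*) [MeasurableSpace S] : TopologicalSpace (S → ℝ) :=
  ⨅ μ : MeasureTheory.SignedMeasure S,
    TopologicalSpace.induced (fun g => signedIntegral μ g) inferInstance

/-- A set `Ψ` of functions is `P(S)`-determining: if two probability measures give the
same integral to every `ψ ∈ Ψ`, then they are equal. -/
def Determining {S : Type*} [MeasurableSpace S] (Ψ : Set (S → ℝ)) : Prop :=
  ∀ Q P : Measure S, IsProbabilityMeasure Q → IsProbabilityMeasure P →
    (∀ ψ ∈ Ψ, (∫ x, ψ x ∂Q) = ∫ x, ψ x ∂P) → Q = P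

/-- `Γ ⊆ C_b(S)` is admissible: it contains `0`, is convex, and is closed in `C_b(S)` for
the weak topology generated by the finite signed measures. -/
def AdmissibleGamma {S : Type*} [TopologicalSpace S] [MeasurableSpace S]
    (Γ : Set (S → ℝ)) : Prop :=
  (fun _ => (0 : ℝ)) ∈ Γ ∧ Convex ℝ Γ ∧ Γ ⊆ Cb S ∧
    ∀ g ∈ Cb S, g ∈ @closure _ (weakTop S) Γ → g ∈ Γ

/-- `Γ` is strictly admissible: there is a `P(S)`-determining set `Ψ ⊆ C_b(S)` such that
for all `ψ ∈ Ψ` there are `c ∈ ℝ` and `ε > 0` with `c ± εψ ∈ Γ`. -/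
def StrictlyAdmissibleGamma {S : Type*} [TopologicalSpace S] [MeasurableSpace S]
    (Γ : Set (S → ℝ)) : Prop :=
  ∃ Ψ : Set (S → ℝ), Ψ ⊆ Cb S ∧ Determining Ψ ∧
    ∀ ψ ∈ Ψ, ∃ c ε : ℝ, 0 < ε ∧
      (fun x => c + ε * ψ x) ∈ Γ ∧ (fun x => c - ε * ψ x) ∈ Γ

/-- `f` is admissible: `f*` is finite everywhere and `lim_{y → -∞} f*(y) < ∞`. -/
def AdmissibleF (f : ℝ → EReal) : Prop :=
  (∀ y : ℝ, fstar f y ≠ ⊤) ∧ ∃ M : ℝ, ∀ᶠ y in Filter.atBot, fstar f y ≤ (M : EReal)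

/-- `f` is strictly convex at `1`: `f` is not affine on any neighborhood of `1`. -/
def StrictlyConvexAtOne (f : ℝ → EReal) : Prop :=
  ∀ ε : ℝ, 0 < ε → ¬ ∃ m q : ℝ, ∀ x : ℝ, |x - 1| < ε → f x = ((m * x + q : ℝ) : EReal)

/-- `f` is strictly convex on the interval `(a,b)` (with `a, b ∈ [-∞,∞]`). -/
def StrictConvexOnAB (a b : EReal) (f : ℝ → EReal) : Prop :=
  ∀ x y t : ℝ, a < (x : EReal) → (x : EReal) < b → a < (y : EReal) → (y : EReal) < b →
    x ≠ y → 0 < t → t < 1 →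
    f (t * x + (1 - t) * y) < ((t : ℝ) : EReal) * f x + (((1 - t : ℝ)) : EReal) * f y

end

noncomputable section
set_option linter.unusedSectionVars false
set_option linter.unusedVariables false

/-- real-valued Legendre transform -/
def phiF (f : ℝ → EReal) (y : ℝ) : ℝ := (fstar f y).toReal

section PhiLemmas
variable {a b : EReal} {f : ℝ → EReal} (hf : IsF1 a b f) (hfa : AdmissibleF f)
include hf hfa

lemma coe_le_fstar (y : ℝ) : (y : EReal) ≤ fstar f y := by
  have h := le_iSup (fun x : ℝ => (((x * y : ℝ) : EReal) - f x)) 1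
  rw [hf.at_one, one_mul] at h
  simpa [fstar] using h

lemma fstar_ne_bot (y : ℝ) : fstar f y ≠ ⊥ :=
  fun h => absurd (h ▸ coe_le_fstar hf hfa y) (by simp)

lemma fstar_eq_coe_phi (y : ℝ) : fstar f y = ((phiF f y : ℝ) : EReal) :=
  (EReal.coe_toReal (hfa.1 y) (fstar_ne_bot hf hfa y)).symm

lemma le_phi (y : ℝ) : y ≤ phiF f y := by
  have := coe_le_fstar hf hfa y
  rw [fstar_eq_coe_phi hf hfa] at this
  exact_mod_cast this

lemma term_le_phi (y x : ℝ) : (((x * y : ℝ) : EReal) - f x) ≤ ((phiF f y : ℝ) : EReal) := by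
  rw [← fstar_eq_coe_phi hf hfa]
  exact le_iSup (fun x : ℝ => (((x * y : ℝ) : EReal) - f x)) x

lemma term_le_phi_real (y x r : ℝ) (hr : f x = (r : EReal)) : x * y - r ≤ phiF f y := by
  have h := term_le_phi hf hfa y x
  rw [hr] at h
  exact_mod_cast h

lemma phi_convex_pt (y₁ y₂ t : ℝ) (ht0 : 0 ≤ t) (ht1 : t ≤ 1) :
    phiF f (t * y₁ + (1 - t) * y₂) ≤ t * phiF f y₁ + (1 - t) * phiF f y₂ := by
  have key : fstar f (t * y₁ + (1 - t) * y₂)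
      ≤ ((t * phiF f y₁ + (1 - t) * phiF f y₂ : ℝ) : EReal) := by
    refine iSup_le fun x => ?_
    rcases eq_or_ne (f x) ⊤ with hx | hx
    · rw [hx]; simp
    · obtain ⟨r, hr⟩ : ∃ r : ℝ, f x = (r : EReal) := by
        lift f x to ℝ using ⟨hx, hf.ne_bot x⟩ with r
        exact ⟨r, rfl⟩
      rw [hr, ← EReal.coe_sub, EReal.coe_le_coe_iff]
      have h1 : x * y₁ - r ≤ phiF f y₁ := term_le_phi_real hf hfa y₁ x r hr
      have h2 : x * y₂ - r ≤ phiF f y₂ := term_le_phi_real hf hfa y₂ x r hr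
      nlinarith [mul_le_mul_of_nonneg_left h1 ht0,
        mul_le_mul_of_nonneg_left h2 (by linarith : (0:ℝ) ≤ 1 - t)]
  have := key
  rw [fstar_eq_coe_phi hf hfa] at this
  exact_mod_cast this

lemma phi_convexOn : ConvexOn ℝ Set.univ (phiF f) := by
  refine ⟨convex_univ, fun y₁ _ y₂ _ s t hs ht hst => ?_⟩
  have h := phi_convex_pt hf hfa y₁ y₂ s hs (by linarith)
  have h1t : (1 : ℝ) - s = t := by linarith
  rw [h1t] at h
  simpa [smul_eq_mul] using h

lemma phi_continuous : Continuous (phiF f) := by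
  rw [← continuousOn_univ]
  exact (phi_convexOn hf hfa).continuousOn isOpen_univ

end PhiLemmas

lemma coe_ennreal_toReal' {x : ℝ≥0∞} (hx : x ≠ ⊤) : ((x.toReal : ℝ) : EReal) = (x : EReal) := by
  rw [← EReal.toReal_coe_ennreal]
  refine EReal.coe_toReal (by simpa [EReal.coe_ennreal_eq_top_iff]) ?_
  intro h
  have h0 : (0:EReal) ≤ (x : EReal) := by
    rw [← EReal.coe_ennreal_zero, EReal.coe_ennreal_le_coe_ennreal_iff]
    exact zero_le
  rw [h] at h0
  simp at h0

lemma posE_coe (r : ℝ) : posE (r : EReal) = ENNReal.ofReal r := by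
  simp [posE, EReal.coe_ne_top]

lemma posE_mono : Monotone posE := by
  intro x y hxy
  unfold posE
  rcases eq_or_ne y ⊤ with hy | hy
  · simp [hy]
  · have hx : x ≠ ⊤ := fun h => hy (top_le_iff.1 (h ▸ hxy))
    rw [if_neg hx, if_neg hy]
    rcases eq_or_ne x ⊥ with hxb | hxb
    · simp [hxb]
    · exact ENNReal.ofReal_le_ofReal (EReal.toReal_le_toReal hxy hxb hy)

section EInt
variable {Ω : Type*} [MeasurableSpace Ω] (P : Measure Ω) [IsFiniteMeasure P]

lemma lintegral_ofReal_lt_top {m : Ω → ℝ} {C : ℝ} (hC : ∀ x, |m x| ≤ C) :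
    (∫⁻ x, ENNReal.ofReal (m x) ∂P) < ⊤ := by
  calc (∫⁻ x, ENNReal.ofReal (m x) ∂P) ≤ ∫⁻ _, ENNReal.ofReal C ∂P := by
        refine lintegral_mono fun x => ENNReal.ofReal_le_ofReal ?_
        exact (abs_le.1 (hC x)).2
    _ = ENNReal.ofReal C * P univ := by rw [lintegral_const]
    _ < ⊤ := by
        exact ENNReal.mul_lt_top ENNReal.ofReal_lt_top (measure_lt_top P univ)

lemma eIntegral_coe_eq {m : Ω → ℝ} (hm : Measurable m) {C : ℝ} (hC : ∀ x, |m x| ≤ C) :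
    eIntegral P (fun x => ((m x : ℝ) : EReal)) = ((∫ x, m x ∂P : ℝ) : EReal) := by
  have hint : Integrable m P := by
    refine (integrable_const C).mono' hm.aestronglyMeasurable ?_
    exact ae_of_all _ fun x => by simpa [Real.norm_eq_abs] using hC x
  have hneg : ∀ x, -((m x : ℝ) : EReal) = ((-(m x) : ℝ) : EReal) := fun x => by
    rw [EReal.coe_neg]
  have hA : (∫⁻ x, posE ((m x : ℝ) : EReal) ∂P) = ∫⁻ x, ENNReal.ofReal (m x) ∂P := by
    simp [posE_coe]
  have hB : (∫⁻ x, posE (-((m x : ℝ) : EReal)) ∂P) = ∫⁻ x, ENNReal.ofReal (-(m x)) ∂P := by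
    refine lintegral_congr fun x => ?_
    rw [hneg x, posE_coe]
  have hCn : ∀ x, |(-(m x))| ≤ C := fun x => by rw [abs_neg]; exact hC x
  have hAfin := (lintegral_ofReal_lt_top P hC).ne
  have hBfin := (lintegral_ofReal_lt_top P hCn).ne
  rw [eIntegral, hA, hB, ← coe_ennreal_toReal' hAfin, ← coe_ennreal_toReal' hBfin,
    ← EReal.coe_sub, integral_eq_lintegral_pos_part_sub_lintegral_neg_part hint]

lemma eIntegral_mono {h₁ h₂ : Ω → EReal} (h : ∀ x, h₁ x ≤ h₂ x) :
    eIntegral P h₁ ≤ eIntegral P h₂ := by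
  refine EReal.sub_le_sub ?_ ?_
  · rw [EReal.coe_ennreal_le_coe_ennreal_iff]
    exact lintegral_mono fun x => posE_mono (h x)
  · rw [EReal.coe_ennreal_le_coe_ennreal_iff]
    exact lintegral_mono fun x => posE_mono (EReal.neg_le_neg_iff.2 (h x))

end EInt
section Support
variable {a b : EReal} {f : ℝ → EReal} (hf : IsF1 a b f) (hfa : AdmissibleF f)

/-- The set of right difference quotients of `f` at `1`. -/
def Tset (b : EReal) (f : ℝ → EReal) : Set ℝ :=
  {t : ℝ | ∃ h : ℝ, 0 < h ∧ ((1 + h : ℝ) : EReal) < b ∧ t = (f (1 + h)).toReal / h}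

/-- A supporting slope of `f` at `1`. -/
def ySupp (b : EReal) (f : ℝ → EReal) : ℝ := sInf (Tset b f)

include hf

lemma exists_right_pt : ∃ h : ℝ, 0 < h ∧ ((1 + h : ℝ) : EReal) < b := by
  obtain ⟨z, h1z, hzb⟩ := exists_between hf.one_lt_b
  have hzt : z ≠ ⊤ := fun h => by rw [h] at hzb; exact absurd hzb (by simp)
  have hzbot : z ≠ ⊥ := fun h => by rw [h] at h1z; exact absurd h1z (by simp)
  lift z to ℝ using ⟨hzt, hzbot⟩ with c
  have h1c : (1 : ℝ) < c := by exact_mod_cast h1z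
  exact ⟨c - 1, by linarith, by rw [show (1 : ℝ) + (c - 1) = c by ring]; exact hzb⟩

lemma exists_left_pt : ∃ h : ℝ, 0 < h ∧ a < ((1 - h : ℝ) : EReal) := by
  obtain ⟨z, haz, hz1⟩ := exists_between hf.a_lt_one
  have hzt : z ≠ ⊤ := fun h => by rw [h] at hz1; exact absurd hz1 (by simp)
  have hzbot : z ≠ ⊥ := fun h => by rw [h] at haz; exact absurd haz (by simp)
  lift z to ℝ using ⟨hzt, hzbot⟩ with c
  have h1c : c < 1 := by exact_mod_cast hz1
  exact ⟨1 - c, by linarith, by rw [show (1 : ℝ) - (1 - c) = c by ring]; exact haz⟩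

lemma f_finite_at (x : ℝ) (hax : a < (x : EReal)) (hxb : (x : EReal) < b) :
    ∃ r : ℝ, f x = (r : EReal) := by
  have h1 := hf.finite_on x hax hxb
  have h2 := hf.ne_bot x
  lift f x to ℝ using ⟨h1, h2⟩ with r
  exact ⟨r, rfl⟩

/-- The fundamental three-slope inequality at the point 1. -/
lemma three_slope {h k r₁ r₂ : ℝ} (hh : 0 < h) (hk : 0 < k)
    (hr₁ : f (1 + h) = (r₁ : EReal)) (hr₂ : f (1 - k) = (r₂ : EReal)) :
    -r₂ / k ≤ r₁ / h := by
  set t : ℝ := k / (h + k) with ht_def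
  have hhk : 0 < h + k := by linarith
  have ht0 : 0 < t := div_pos hk hhk
  have ht1 : t < 1 := by rw [div_lt_one hhk]; linarith
  have harg : t * (1 + h) + (1 - t) * (1 - k) = 1 := by
    rw [ht_def]
    field_simp
    ring
  have hconv := hf.convex (1 + h) (1 - k) t ht0 ht1
  rw [harg, hf.at_one, hr₁, hr₂] at hconv
  have hconv' : (0 : ℝ) ≤ t * r₁ + (1 - t) * r₂ := by
    rw [show ((t:ℝ) : EReal) * (r₁ : EReal) = ((t * r₁ : ℝ) : EReal) from (EReal.coe_mul t r₁),
      show ((1 - t : ℝ) : EReal) * (r₂ : EReal) = (((1-t) * r₂ : ℝ) : EReal)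
        from (EReal.coe_mul (1-t) r₂), ← EReal.coe_add] at hconv
    exact_mod_cast hconv
  have ht' : t = k / (h + k) := ht_def
  have h1t : 1 - t = h / (h + k) := by rw [ht']; field_simp; ring
  rw [ht', h1t] at hconv'
  rw [div_le_div_iff₀ hk hh] at *
  have : 0 ≤ k * r₁ + h * r₂ := by
    have := mul_le_mul_of_nonneg_left hconv' (le_of_lt hhk)
    calc (0:ℝ) = (h+k) * 0 := by ring
      _ ≤ (h+k) * (k / (h + k) * r₁ + h / (h + k) * r₂) := this
      _ = k * r₁ + h * r₂ := by field_simp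
  nlinarith

lemma Tset_nonempty : (Tset b f).Nonempty := by
  obtain ⟨h, hh, hhb⟩ := exists_right_pt hf
  exact ⟨(f (1 + h)).toReal / h, h, hh, hhb, rfl⟩

lemma Tset_bddBelow : BddBelow (Tset b f) := by
  obtain ⟨k, hk, hak⟩ := exists_left_pt hf
  have hk1 : ((1 - k : ℝ) : EReal) < b := lt_trans (by exact_mod_cast (by linarith : (1:ℝ) - k < 1)) hf.one_lt_b
  obtain ⟨r₂, hr₂⟩ := f_finite_at hf (1 - k) hak hk1
  refine ⟨-r₂ / k, fun t ⟨h, hh, hhb, hteq⟩ => ?_⟩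
  have hah : a < ((1 + h : ℝ) : EReal) :=
    lt_trans hf.a_lt_one (by exact_mod_cast (by linarith : (1:ℝ) < 1 + h))
  obtain ⟨r₁, hr₁⟩ := f_finite_at hf (1 + h) hah hhb
  rw [hteq, hr₁, EReal.toReal_coe]
  exact three_slope hf hh hk hr₁ hr₂

lemma ySupp_le (h : ℝ) (hh : 0 < h) (hhb : ((1 + h : ℝ) : EReal) < b) :
    ySupp b f * h ≤ (f (1 + h)).toReal := by
  have hmem : (f (1 + h)).toReal / h ∈ Tset b f := ⟨h, hh, hhb, rfl⟩
  have := csInf_le (Tset_bddBelow hf) hmem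
  rw [show ySupp b f = sInf (Tset b f) from rfl]
  calc sInf (Tset b f) * h ≤ ((f (1 + h)).toReal / h) * h :=
        mul_le_mul_of_nonneg_right this (le_of_lt hh)
    _ = (f (1 + h)).toReal := by field_simp

/-- The support line property: `f x ≥ y₀ (x - 1)` for all `x`. -/
lemma support_line (x : ℝ) : ((ySupp b f * (x - 1) : ℝ) : EReal) ≤ f x := by
  rcases eq_or_ne (f x) ⊤ with hfx | hfx
  · rw [hfx]; exact le_top
  have hfxb : f x ≠ ⊥ := hf.ne_bot x
  obtain ⟨r, hr⟩ : ∃ r : ℝ, f x = (r : EReal) := by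
    lift f x to ℝ using ⟨hfx, hfxb⟩ with r; exact ⟨r, rfl⟩
  rcases lt_trichotomy x 1 with hx1 | hx1 | hx1
  · -- x < 1 case
    set k : ℝ := 1 - x with hk_def
    have hk : 0 < k := by rw [hk_def]; linarith
    have hrx : f (1 - k) = (r : EReal) := by rw [show (1:ℝ) - k = x by rw [hk_def]; ring]; exact hr
    have key : -r / k ≤ ySupp b f := by
      refine le_csInf (Tset_nonempty hf) fun t ⟨h, hh, hhb, hteq⟩ => ?_
      have hah : a < ((1 + h : ℝ) : EReal) :=
        lt_trans hf.a_lt_one (by exact_mod_cast (by linarith : (1:ℝ) < 1 + h))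
      obtain ⟨r₁, hr₁⟩ := f_finite_at hf (1 + h) hah hhb
      rw [hteq, hr₁, EReal.toReal_coe]
      exact three_slope hf hh hk hr₁ hrx
    rw [hr, EReal.coe_le_coe_iff]
    have := mul_le_mul_of_nonneg_right key (le_of_lt hk)
    rw [div_mul_cancel₀ (-r) (ne_of_gt hk)] at this
    calc ySupp b f * (x - 1) = ySupp b f * (-k) := by rw [hk_def]; ring_nf
      _ = -(ySupp b f * k) := by ring
      _ ≤ r := by linarith
  · -- x = 1
    rw [hx1, hf.at_one]; simp
  · -- x > 1 case
    have hxb : (x : EReal) ≤ b := by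
      by_contra hc
      push_neg at hc
      exact hfx (hf.top_outside x (Or.inr hc))
    set z : ℝ := (1 + x) / 2 with hz_def
    have hz1 : 1 < z := by rw [hz_def]; linarith
    have hzx : z < x := by rw [hz_def]; linarith
    have hzb : (z : EReal) < b := lt_of_lt_of_le (by exact_mod_cast hzx) hxb
    have haz : a < (z : EReal) :=
      lt_trans hf.a_lt_one (by exact_mod_cast hz1)
    obtain ⟨rz, hrz⟩ := f_finite_at hf z haz hzb
    have hsupz : ySupp b f * (z - 1) ≤ rz := by
      have := ySupp_le hf (z - 1) (by linarith) (by rw [show (1:ℝ) + (z-1) = z by ring]; exact hzb)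
      rw [show (1:ℝ) + (z-1) = z by ring, hrz, EReal.toReal_coe] at this
      exact this
    -- convexity: z = (1/2) * x + (1/2) * 1
    have hconv := hf.convex x 1 (1/2 : ℝ) (by norm_num) (by norm_num)
    rw [hf.at_one, hr] at hconv
    have harg : (1/2 : ℝ) * x + (1 - 1/2) * 1 = z := by rw [hz_def]; ring
    rw [harg] at hconv
    have hconv' : rz ≤ (1/2 : ℝ) * r := by
      rw [hrz] at hconv
      have : (((1:ℝ)/2 : ℝ) : EReal) * (r : EReal) + ((1 - 1/2 : ℝ) : EReal) * (0 : EReal)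
          = (((1:ℝ)/2 * r : ℝ) : EReal) := by
        rw [mul_zero, add_zero, EReal.coe_mul]
      rw [this] at hconv
      exact_mod_cast hconv
    rw [hr, EReal.coe_le_coe_iff]
    have hzz : z - 1 = (x - 1) / 2 := by rw [hz_def]; ring
    rw [hzz] at hsupz
    nlinarith
end Support

section Dichotomy
variable {a b : EReal} {f : ℝ → EReal} (hf : IsF1 a b f) (hfa : AdmissibleF f)

include hf hfa

lemma phi_ySupp : phiF f (ySupp b f) = ySupp b f := by
  set y₀ := ySupp b f with hy₀
  refine le_antisymm ?_ (le_phi hf hfa y₀)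
  have key : fstar f y₀ ≤ ((y₀ : ℝ) : EReal) := by
    refine iSup_le fun x => ?_
    calc (((x * y₀ : ℝ) : EReal) - f x) ≤ (((x * y₀ : ℝ) : EReal) - ((y₀ * (x-1) : ℝ) : EReal)) :=
          EReal.sub_le_sub le_rfl (support_line hf x)
      _ = ((x * y₀ - y₀ * (x - 1) : ℝ) : EReal) := by rw [EReal.coe_sub]
      _ = ((y₀ : ℝ) : EReal) := by norm_cast; ring
  rw [fstar_eq_coe_phi hf hfa] at key
  exact_mod_cast key

lemma affine_left (c : ℝ) (hc0 : 0 ≤ c) (hc1 : c < 1)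
    (hlow : ∀ k : ℝ, 0 < k → ySupp b f - c * k ≤ phiF f (ySupp b f - k)) :
    ∀ x : ℝ, (1 + c) / 2 < x → x < 1 → f x = ((ySupp b f * (x - 1) : ℝ) : EReal) := by
  intro x hx1 hx2
  set y₀ := ySupp b f with hy₀
  have claim : ∀ k : ℝ, 0 < k → f x ≤ ((y₀ * (x - 1) + k : ℝ) : EReal) := by
    intro k hk
    set η : ℝ := (1 - c) / 2 with hη
    have hη0 : 0 < η := by rw [hη]; linarith
    have h1 : ((y₀ - c * k - η * k : ℝ) : EReal) < fstar f (y₀ - k) := by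
      rw [fstar_eq_coe_phi hf hfa, EReal.coe_lt_coe_iff]
      have := hlow k hk
      nlinarith
    obtain ⟨xb, hxb⟩ := lt_iSup_iff.1 h1
    rcases eq_or_ne (f xb) ⊤ with ht | ht
    · rw [ht] at hxb; simp at hxb
    obtain ⟨rb, hrb⟩ : ∃ rb : ℝ, f xb = (rb : EReal) := by
      lift f xb to ℝ using ⟨ht, hf.ne_bot xb⟩ with rb; exact ⟨rb, rfl⟩
    rw [hrb, ← EReal.coe_sub, EReal.coe_lt_coe_iff] at hxb
    have hsup : y₀ * (xb - 1) ≤ rb := by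
      have := support_line hf xb
      rw [hrb, EReal.coe_le_coe_iff] at this; exact this
    have hxblt : xb < c + η := by nlinarith
    have hxbx : xb < x := by
      have : c + η = (1 + c) / 2 := by rw [hη]; ring
      linarith [hx1, hxblt, this]
    set t : ℝ := (1 - x) / (1 - xb) with htd
    have h1xb : 0 < 1 - xb := by linarith
    have ht0 : 0 < t := div_pos (by linarith) h1xb
    have ht1 : t < 1 := by rw [htd, div_lt_one h1xb]; linarith
    have harg : t * xb + (1 - t) * 1 = x := by
      rw [htd]; field_simp; ring
    have hconv := hf.convex xb 1 t ht0 ht1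
    rw [harg, hf.at_one, hrb, mul_zero, add_zero, ← EReal.coe_mul] at hconv
    refine le_trans hconv ?_
    rw [EReal.coe_le_coe_iff]
    -- t * rb ≤ y₀ * (x-1) + k
    have htx : t * (xb - 1) = x - 1 := by rw [htd]; field_simp; ring
    have hrb_le : rb ≤ y₀ * (xb - 1) + k * (c + η - xb) := by nlinarith
    have h2 : t * rb ≤ t * (y₀ * (xb - 1)) + t * (k * (c + η - xb)) := by nlinarith
    have h3 : t * (y₀ * (xb - 1)) = y₀ * (x - 1) := by rw [← htx]; ring
    have h4 : t * (c + η - xb) ≤ 1 := by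
      have h5 : c + η - xb ≤ 1 - xb := by rw [hη]; linarith
      have h6 : t * (c + η - xb) ≤ t * (1 - xb) := by nlinarith
      have h7 : t * (1 - xb) = 1 - x := by rw [htd]; field_simp
      have h8 : 1 - x ≤ 1 := by nlinarith [hx1, hc0]
      linarith
    nlinarith
  rcases eq_or_ne (f x) ⊤ with ht | ht
  · exfalso
    have h2 := claim 1 one_pos
    rw [ht, top_le_iff] at h2
    exact EReal.coe_ne_top _ h2
  obtain ⟨r, hr⟩ : ∃ r : ℝ, f x = (r : EReal) := by
    lift f x to ℝ using ⟨ht, hf.ne_bot x⟩ with r; exact ⟨r, rfl⟩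
  rw [hr]
  have hle : r ≤ y₀ * (x - 1) := by
    by_contra hcon
    push_neg at hcon
    have := claim ((r - y₀ * (x - 1)) / 2) (by linarith)
    rw [hr, EReal.coe_le_coe_iff] at this
    linarith
  have hge : y₀ * (x - 1) ≤ r := by
    have := support_line hf x
    rw [hr, EReal.coe_le_coe_iff] at this; exact this
  rw [EReal.coe_eq_coe_iff]
  linarith

lemma affine_right (c : ℝ) (hc : 1 < c)
    (hlow : ∀ k : ℝ, 0 < k → ySupp b f + c * k ≤ phiF f (ySupp b f + k)) :
    ∀ x : ℝ, 1 < x → x < 1 + (c - 1) / 2 → f x = ((ySupp b f * (x - 1) : ℝ) : EReal) := by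
  intro x hx1 hx2
  set y₀ := ySupp b f with hy₀
  have claim : ∀ k : ℝ, 0 < k → f x ≤ ((y₀ * (x - 1) + k * (x - 1) : ℝ) : EReal) := by
    intro k hk
    set η : ℝ := (c - 1) / 2 with hη
    have hη0 : 0 < η := by rw [hη]; linarith
    have h1 : ((y₀ + c * k - η * k : ℝ) : EReal) < fstar f (y₀ + k) := by
      rw [fstar_eq_coe_phi hf hfa, EReal.coe_lt_coe_iff]
      have := hlow k hk
      nlinarith
    obtain ⟨xb, hxb⟩ := lt_iSup_iff.1 h1
    rcases eq_or_ne (f xb) ⊤ with ht | ht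
    · rw [ht] at hxb; simp at hxb
    obtain ⟨rb, hrb⟩ : ∃ rb : ℝ, f xb = (rb : EReal) := by
      lift f xb to ℝ using ⟨ht, hf.ne_bot xb⟩ with rb; exact ⟨rb, rfl⟩
    rw [hrb, ← EReal.coe_sub, EReal.coe_lt_coe_iff] at hxb
    have hsup : y₀ * (xb - 1) ≤ rb := by
      have := support_line hf xb
      rw [hrb, EReal.coe_le_coe_iff] at this; exact this
    have hxbgt : c - η < xb := by nlinarith
    have hxbx : x < xb := by
      have : c - η = 1 + η := by rw [hη]; ring
      linarith
    set t : ℝ := (x - 1) / (xb - 1) with htd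
    have h1xb : 0 < xb - 1 := by linarith
    have ht0 : 0 < t := div_pos (by linarith) h1xb
    have ht1 : t < 1 := by rw [htd, div_lt_one h1xb]; linarith
    have harg : t * xb + (1 - t) * 1 = x := by
      rw [htd]; field_simp; ring
    have hconv := hf.convex xb 1 t ht0 ht1
    rw [harg, hf.at_one, hrb, mul_zero, add_zero, ← EReal.coe_mul] at hconv
    refine le_trans hconv ?_
    rw [EReal.coe_le_coe_iff]
    have htx : t * (xb - 1) = x - 1 := by rw [htd]; field_simp
    have hrb_le : rb ≤ y₀ * (xb - 1) + k * (xb - (c - η)) := by nlinarith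
    have hstep : xb - (c - η) ≤ xb - 1 := by
      have : c - η = 1 + η := by rw [hη]; ring
      linarith
    have hrb_le2 : rb ≤ y₀ * (xb - 1) + k * (xb - 1) := by nlinarith
    have h2 : t * rb ≤ t * (y₀ * (xb - 1)) + t * (k * (xb - 1)) := by
      nlinarith [mul_le_mul_of_nonneg_left hrb_le2 ht0.le]
    have h3 : t * (y₀ * (xb - 1)) = y₀ * (x - 1) := by rw [← htx]; ring
    have h4 : t * (k * (xb - 1)) = k * (x - 1) := by rw [← htx]; ring
    linarith
  rcases eq_or_ne (f x) ⊤ with ht | ht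
  · exfalso
    have h2 := claim 1 one_pos
    rw [ht, top_le_iff] at h2
    exact EReal.coe_ne_top _ h2
  obtain ⟨r, hr⟩ : ∃ r : ℝ, f x = (r : EReal) := by
    lift f x to ℝ using ⟨ht, hf.ne_bot x⟩ with r; exact ⟨r, rfl⟩
  rw [hr]
  have hle : r ≤ y₀ * (x - 1) := by
    by_contra hcon
    push_neg at hcon
    have hx1' : (0:ℝ) < x - 1 := by linarith
    have := claim ((r - y₀ * (x - 1)) / (2 * (x - 1))) (div_pos (by linarith) (by linarith))
    rw [hr, EReal.coe_le_coe_iff] at this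
    have hx1' : 0 < x - 1 := by linarith
    have : r ≤ y₀ * (x - 1) + (r - y₀ * (x - 1)) / 2 := by
      have heq : (r - y₀ * (x - 1)) / (2 * (x - 1)) * (x - 1) = (r - y₀ * (x - 1)) / 2 := by
        field_simp
      linarith [this, heq.symm.le, heq.le]
    linarith
  have hge : y₀ * (x - 1) ≤ r := by
    have := support_line hf x
    rw [hr, EReal.coe_le_coe_iff] at this; exact this
  rw [EReal.coe_eq_coe_iff]
  linarith

lemma dichotomy (hfs : StrictlyConvexAtOne f) :
    (∀ ε : ℝ, 0 < ε → ∃ k : ℝ, 0 < k ∧ phiF f (ySupp b f - k) ≤ ySupp b f - (1 - ε) * k)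
    ∨ (∀ ε : ℝ, 0 < ε → ∃ k : ℝ, 0 < k ∧ phiF f (ySupp b f + k) ≤ ySupp b f + (1 + ε) * k) := by
  set y₀ := ySupp b f with hy₀
  by_contra hcon
  push_neg at hcon
  obtain ⟨⟨ε₁, hε₁, H₁⟩, ⟨ε₂, hε₂, H₂⟩⟩ := hcon
  set ε₁' : ℝ := min ε₁ (1/2) with hε₁'d
  have hε₁' : 0 < ε₁' := lt_min hε₁ (by norm_num)
  have hε₁'le : ε₁' ≤ 1/2 := min_le_right _ _
  set c₁ : ℝ := 1 - ε₁' with hc₁d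
  have hL : ∀ k : ℝ, 0 < k → y₀ - c₁ * k ≤ phiF f (y₀ - k) := by
    intro k hk
    have h := H₁ k hk
    have : (1 - ε₁) * k ≤ c₁ * k := by
      have : 1 - ε₁ ≤ c₁ := by rw [hc₁d]; have := min_le_left ε₁ (1/2 : ℝ); linarith
      nlinarith
    linarith
  have hAL := affine_left hf hfa c₁ (by rw [hc₁d]; linarith) (by rw [hc₁d]; linarith) hL
  set c₂ : ℝ := 1 + ε₂ with hc₂d
  have hR : ∀ k : ℝ, 0 < k → y₀ + c₂ * k ≤ phiF f (y₀ + k) := by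
    intro k hk
    have h := H₂ k hk
    linarith [h]
  have hAR := affine_right hf hfa c₂ (by rw [hc₂d]; linarith) hR
  set ε : ℝ := min (ε₁' / 2) (ε₂ / 2) with hεd
  have hε : 0 < ε := lt_min (by linarith) (by linarith)
  refine hfs ε hε ⟨y₀, -y₀, fun x hx => ?_⟩
  have hcoe : ((y₀ * x + -y₀ : ℝ) : EReal) = ((y₀ * (x - 1) : ℝ) : EReal) := by
    norm_cast; ring
  rw [hcoe]
  rcases lt_trichotomy x 1 with hx1 | hx1 | hx1
  · refine hAL x ?_ hx1
    have habs : 1 - x < ε := by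
      have := abs_lt.1 hx
      linarith [this.1]
    have : ε ≤ ε₁' / 2 := min_le_left _ _
    have : (1 + c₁) / 2 = 1 - ε₁' / 2 := by rw [hc₁d]; ring
    linarith
  · rw [hx1, hf.at_one]
    norm_num
  · refine hAR x hx1 ?_
    have habs : x - 1 < ε := by
      have := abs_lt.1 hx
      linarith [this.2]
    have : ε ≤ ε₂ / 2 := min_le_right _ _
    have : 1 + (c₂ - 1) / 2 = 1 + ε₂ / 2 := by rw [hc₂d]; ring
    linarith
end Dichotomy

section Chord
variable {a b : EReal} {f : ℝ → EReal} (hf : IsF1 a b f) (hfa : AdmissibleF f)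
include hf hfa

lemma phi_chord_left {y₀ k ε C' δ s : ℝ} (hk : 0 < k) (hC' : 0 < C')
    (hphi0 : phiF f y₀ = y₀) (hkφ : phiF f (y₀ - k) ≤ y₀ - (1 - ε / C') * k)
    (hs1 : -C' ≤ s) (hs2 : s ≤ 0) (hδ : 0 < δ) (hδk : δ * C' ≤ k) (hε : 0 < ε) :
    phiF f (y₀ + δ * s) ≤ y₀ + δ * s + δ * ε := by
  have hεC' : 0 < ε / C' := div_pos hε hC'
  have ht0 : 0 ≤ -(δ * s) / k := div_nonneg (by nlinarith) hk.le
  have hmul : δ * (-s) ≤ δ * C' := mul_le_mul_of_nonneg_left (by linarith) hδ.le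
  have ht1 : -(δ * s) / k ≤ 1 := by
    rw [div_le_one hk]; linarith
  have hcv := phi_convex_pt hf hfa (y₀ - k) y₀ (-(δ * s) / k) ht0 ht1
  have htk : (-(δ * s) / k) * k = -(δ * s) := by field_simp
  have hargt : (-(δ * s) / k) * (y₀ - k) + (1 - -(δ * s) / k) * y₀ = y₀ + δ * s := by
    field_simp; ring
  rw [hargt, hphi0] at hcv
  have hB : (-(δ * s) / k) * phiF f (y₀ - k) ≤ (-(δ * s) / k) * (y₀ - (1 - ε / C') * k) :=
    mul_le_mul_of_nonneg_left hkφ ht0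
  have e1 : (-s) * (ε / C') ≤ ε := by
    calc (-s) * (ε / C') ≤ C' * (ε / C') := mul_le_mul_of_nonneg_right (by linarith) hεC'.le
      _ = ε := by field_simp
  have e2 : δ * ((-s) * (ε / C')) ≤ δ * ε := mul_le_mul_of_nonneg_left e1 hδ.le
  have key : (-(δ * s) / k) * (y₀ - (1 - ε / C') * k) + (1 - -(δ * s) / k) * y₀
      = y₀ + δ * s + δ * ((-s) * (ε / C')) := by
    have expand : (-(δ * s) / k) * (y₀ - (1 - ε / C') * k) + (1 - -(δ * s) / k) * y₀
        = y₀ - ((-(δ * s) / k) * k) * (1 - ε / C') := by ring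
    rw [expand, htk]; ring
  linarith [hcv, hB, key.le, key.ge]

lemma phi_chord_right {y₀ k ε C' δ s : ℝ} (hk : 0 < k) (hC' : 0 < C')
    (hphi0 : phiF f y₀ = y₀) (hkφ : phiF f (y₀ + k) ≤ y₀ + (1 + ε / C') * k)
    (hs1 : 0 ≤ s) (hs2 : s ≤ C') (hδ : 0 < δ) (hδk : δ * C' ≤ k) (hε : 0 < ε) :
    phiF f (y₀ + δ * s) ≤ y₀ + δ * s + δ * ε := by
  have hεC' : 0 < ε / C' := div_pos hε hC'
  have ht0 : 0 ≤ (δ * s) / k := div_nonneg (by nlinarith) hk.le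
  have hmul : δ * s ≤ δ * C' := mul_le_mul_of_nonneg_left (by linarith) hδ.le
  have ht1 : (δ * s) / k ≤ 1 := by
    rw [div_le_one hk]; linarith
  have hcv := phi_convex_pt hf hfa (y₀ + k) y₀ ((δ * s) / k) ht0 ht1
  have htk : ((δ * s) / k) * k = δ * s := by field_simp
  have hargt : ((δ * s) / k) * (y₀ + k) + (1 - (δ * s) / k) * y₀ = y₀ + δ * s := by
    field_simp; ring
  rw [hargt, hphi0] at hcv
  have hB : ((δ * s) / k) * phiF f (y₀ + k) ≤ ((δ * s) / k) * (y₀ + (1 + ε / C') * k) :=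
    mul_le_mul_of_nonneg_left hkφ ht0
  have e1 : s * (ε / C') ≤ ε := by
    calc s * (ε / C') ≤ C' * (ε / C') := mul_le_mul_of_nonneg_right (by linarith) hεC'.le
      _ = ε := by field_simp
  have e2 : δ * (s * (ε / C')) ≤ δ * ε := mul_le_mul_of_nonneg_left e1 hδ.le
  have key : ((δ * s) / k) * (y₀ + (1 + ε / C') * k) + (1 - (δ * s) / k) * y₀
      = y₀ + δ * s + δ * (s * (ε / C')) := by
    have expand : ((δ * s) / k) * (y₀ + (1 + ε / C') * k) + (1 - (δ * s) / k) * y₀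
        = y₀ + (((δ * s) / k) * k) * (1 + ε / C') := by ring
    rw [expand, htk]; ring
  linarith [hcv, hB, key.le, key.ge]
end Chord


lemma integrable_of_bound {Ω : Type*} [MeasurableSpace Ω] (P : Measure Ω) [IsFiniteMeasure P]
    {m : Ω → ℝ} (hm : Measurable m) {C : ℝ} (hC : ∀ x, |m x| ≤ C) : Integrable m P := by
  refine (integrable_const C).mono' hm.aestronglyMeasurable ?_
  exact ae_of_all _ fun x => by simpa [Real.norm_eq_abs] using hC x

section Lambda
variable {a b : EReal} {f : ℝ → EReal} (hf : IsF1 a b f) (hfa : AdmissibleF f)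
variable {Ω : Type*} [MeasurableSpace Ω] (P : Measure Ω) [IsProbabilityMeasure P]

include hf hfa

lemma lambda_ge {g : Ω → ℝ} (hg : Measurable g) {C : ℝ} (hC : ∀ x, |g x| ≤ C) :
    ((∫ x, g x ∂P : ℝ) : EReal) ≤ LambdaF f P g := by
  refine le_iInf fun ν => ?_
  have hmeas : Measurable fun x => g x - ν := hg.sub measurable_const
  have hbd : ∀ x, |g x - ν| ≤ C + |ν| := fun x => by
    calc |g x - ν| ≤ |g x| + |ν| := abs_sub _ _
      _ ≤ C + |ν| := by linarith [hC x]
  have h1 : eIntegral P (fun x => (((g x - ν : ℝ)) : EReal)) = ((∫ x, (g x - ν) ∂P : ℝ) : EReal) :=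
    eIntegral_coe_eq P hmeas hbd
  have h2 : eIntegral P (fun x => (((g x - ν : ℝ)) : EReal))
      ≤ eIntegral P (fun x => fstar f (g x - ν)) :=
    eIntegral_mono P fun x => coe_le_fstar hf hfa (g x - ν)
  have h3 : (∫ x, (g x - ν) ∂P : ℝ) = (∫ x, g x ∂P) - ν := by
    rw [integral_sub (integrable_of_bound P hg hC) (integrable_const ν), integral_const]
    simp [measure_univ]
  rw [h3] at h1
  calc ((∫ x, g x ∂P : ℝ) : EReal) = (ν : EReal) + (((∫ x, g x ∂P) - ν : ℝ) : EReal) := by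
        rw [← EReal.coe_add]; norm_cast; ring
    _ ≤ (ν : EReal) + eIntegral P (fun x => fstar f (g x - ν)) := by
        refine add_le_add le_rfl ?_
        rw [← h1]
        exact h2

set_option maxHeartbeats 2000000 in
/-- The key upper estimate on `Λ_f^P[δ g]` for small `δ`. -/
lemma core_estimate (hfs : StrictlyConvexAtOne f) {g : Ω → ℝ} (hg : Measurable g)
    {C : ℝ} (hC : ∀ x, |g x| ≤ C) {ε : ℝ} (hε : 0 < ε) :
    ∃ δ₁ : ℝ, 0 < δ₁ ∧ ∀ δ : ℝ, 0 < δ → δ ≤ δ₁ →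
      LambdaF f P (fun x => δ * g x) ≤ ((δ * ((∫ x, g x ∂P) + ε) : ℝ) : EReal) := by
  have hCp0 : (0:ℝ) ≤ max C 0 := le_max_right _ _
  have hCCp : C ≤ max C 0 := le_max_left _ _
  obtain ⟨Cp, hCp, hCp0, hCCp⟩ : ∃ Cp : ℝ, Cp = max C 0 ∧ 0 ≤ Cp ∧ C ≤ Cp :=
    ⟨max C 0, rfl, hCp0, hCCp⟩
  obtain ⟨C', hC'def, hC'0, hC'1, hC'Cp⟩ :
      ∃ C' : ℝ, C' = 2 * Cp + 1 ∧ 0 < C' ∧ 1 ≤ C' ∧ 2 * Cp + 1 ≤ C' :=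
    ⟨2 * Cp + 1, rfl, by linarith, by linarith, le_refl _⟩
  have hεC' : 0 < ε / C' := div_pos hε hC'0
  have hphi0 : phiF f (ySupp b f) = ySupp b f := phi_ySupp hf hfa
  have hbnd : ∀ x, -C' ≤ g x - (Cp + 1) ∧ g x - (Cp + 1) ≤ -1 := fun x => by
    have h := abs_le.1 (hC x)
    constructor <;> [nlinarith [h.1]; nlinarith [h.2]]
  have hbnd' : ∀ x, 1 ≤ g x + (Cp + 1) ∧ g x + (Cp + 1) ≤ C' := fun x => by
    have h := abs_le.1 (hC x)
    constructor <;> [nlinarith [h.1]; nlinarith [h.2]]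
  rcases dichotomy hf hfa hfs with HL | HR
  · obtain ⟨k, hk, hkφ⟩ := HL (ε / C') hεC'
    refine ⟨k / C', div_pos hk hC'0, fun δ hδ hδ₁ => ?_⟩
    have hδC' : δ * C' ≤ k := by
      rw [← le_div_iff₀ hC'0]; exact hδ₁
    have harg : ∀ x : Ω, δ * g x - (δ * (Cp + 1) - ySupp b f)
        = ySupp b f + δ * (g x - (Cp + 1)) := fun x => by ring
    have hptw_ub : ∀ x : Ω, phiF f (δ * g x - (δ * (Cp + 1) - ySupp b f))
        ≤ ySupp b f + δ * (g x - (Cp + 1)) + δ * ε := by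
      intro x
      rw [harg x]
      exact phi_chord_left hf hfa hk hC'0 hphi0 hkφ (hbnd x).1 (by linarith [(hbnd x).2])
        hδ hδC' hε
    have hptw_lb : ∀ x : Ω, ySupp b f + δ * (g x - (Cp + 1))
        ≤ phiF f (δ * g x - (δ * (Cp + 1) - ySupp b f)) := by
      intro x
      rw [harg x]
      exact le_phi hf hfa _
    have hm2 : Measurable fun x => phiF f (δ * g x - (δ * (Cp + 1) - ySupp b f)) :=
      (phi_continuous hf hfa).measurable.comp ((hg.const_mul δ).sub measurable_const)
    have hbd2 : ∀ x, |phiF f (δ * g x - (δ * (Cp + 1) - ySupp b f))|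
        ≤ |ySupp b f| + k + k * ε := by
      intro x
      have hl := hptw_lb x
      have hu := hptw_ub x
      have h1 := (hbnd x).1
      have h2 := (hbnd x).2
      have e1 : δ * (-C') ≤ δ * (g x - (Cp + 1)) := mul_le_mul_of_nonneg_left h1 hδ.le
      have e2 : δ * (g x - (Cp + 1)) ≤ 0 := by nlinarith
      have e3 : -k ≤ δ * (-C') := by nlinarith
      have e4 : δ * ε ≤ k * ε := by nlinarith
      have e5 := neg_abs_le (ySupp b f)
      have e6 := le_abs_self (ySupp b f)
      rw [abs_le]
      constructor <;> nlinarith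
    have hintegral_eq : eIntegral P (fun x => fstar f (δ * g x - (δ * (Cp + 1) - ySupp b f)))
        = ((∫ x, phiF f (δ * g x - (δ * (Cp + 1) - ySupp b f)) ∂P : ℝ) : EReal) := by
      have hfs_eq : (fun x : Ω => fstar f (δ * g x - (δ * (Cp + 1) - ySupp b f)))
          = fun x => ((phiF f (δ * g x - (δ * (Cp + 1) - ySupp b f)) : ℝ) : EReal) :=
        funext fun x => fstar_eq_coe_phi hf hfa _
      rw [hfs_eq]
      exact eIntegral_coe_eq P hm2 hbd2
    have hint_g : Integrable g P := integrable_of_bound P hg hC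
    have hint_m2 : Integrable (fun x => phiF f (δ * g x - (δ * (Cp + 1) - ySupp b f))) P :=
      integrable_of_bound P hm2 hbd2
    have hint_rhs : Integrable (fun x => ySupp b f + δ * (g x - (Cp + 1)) + δ * ε) P := by
      apply Integrable.add _ (integrable_const _)
      exact (integrable_const _).add ((hint_g.sub (integrable_const _)).const_mul δ)
    have hmono : (∫ x, phiF f (δ * g x - (δ * (Cp + 1) - ySupp b f)) ∂P)
        ≤ ∫ x, (ySupp b f + δ * (g x - (Cp + 1)) + δ * ε) ∂P :=
      integral_mono hint_m2 hint_rhs hptw_ub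
    have hRHS : (∫ x, (ySupp b f + δ * (g x - (Cp + 1)) + δ * ε) ∂P)
        = ySupp b f + δ * ((∫ x, g x ∂P) - (Cp + 1)) + δ * ε := by
      have hfun : (fun x => ySupp b f + δ * (g x - (Cp + 1)) + δ * ε)
          = fun x => δ * g x + (ySupp b f - δ * (Cp + 1) + δ * ε) := funext fun x => by ring
      rw [hfun, integral_add (hint_g.const_mul δ) (integrable_const _), integral_const_mul,
        integral_const]
      simp [measure_univ]
      ring
    calc LambdaF f P (fun x => δ * g x)
        ≤ ((δ * (Cp + 1) - ySupp b f : ℝ) : EReal)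
            + eIntegral P (fun x => fstar f (δ * g x - (δ * (Cp + 1) - ySupp b f))) :=
          iInf_le _ (δ * (Cp + 1) - ySupp b f)
      _ = (((δ * (Cp + 1) - ySupp b f)
            + (∫ x, phiF f (δ * g x - (δ * (Cp + 1) - ySupp b f)) ∂P) : ℝ) : EReal) := by
          rw [hintegral_eq, ← EReal.coe_add]
      _ ≤ ((δ * ((∫ x, g x ∂P) + ε) : ℝ) : EReal) := by
          rw [EReal.coe_le_coe_iff]
          have h := hmono
          rw [hRHS] at h
          linarith
  · obtain ⟨k, hk, hkφ⟩ := HR (ε / C') hεC'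
    refine ⟨k / C', div_pos hk hC'0, fun δ hδ hδ₁ => ?_⟩
    have hδC' : δ * C' ≤ k := by
      rw [← le_div_iff₀ hC'0]; exact hδ₁
    have harg : ∀ x : Ω, δ * g x - (-(δ * (Cp + 1)) - ySupp b f)
        = ySupp b f + δ * (g x + (Cp + 1)) := fun x => by ring
    have hptw_ub : ∀ x : Ω, phiF f (δ * g x - (-(δ * (Cp + 1)) - ySupp b f))
        ≤ ySupp b f + δ * (g x + (Cp + 1)) + δ * ε := by
      intro x
      rw [harg x]
      exact phi_chord_right hf hfa hk hC'0 hphi0 hkφ (by linarith [(hbnd' x).1])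
        (hbnd' x).2 hδ hδC' hε
    have hptw_lb : ∀ x : Ω, ySupp b f + δ * (g x + (Cp + 1))
        ≤ phiF f (δ * g x - (-(δ * (Cp + 1)) - ySupp b f)) := by
      intro x
      rw [harg x]
      exact le_phi hf hfa _
    have hm2 : Measurable fun x => phiF f (δ * g x - (-(δ * (Cp + 1)) - ySupp b f)) :=
      (phi_continuous hf hfa).measurable.comp ((hg.const_mul δ).sub measurable_const)
    have hbd2 : ∀ x, |phiF f (δ * g x - (-(δ * (Cp + 1)) - ySupp b f))|
        ≤ |ySupp b f| + k + k * ε := by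
      intro x
      have hl := hptw_lb x
      have hu := hptw_ub x
      have h1 := (hbnd' x).1
      have h2 := (hbnd' x).2
      have e1 : 0 ≤ δ * (g x + (Cp + 1)) := by nlinarith
      have e2 : δ * (g x + (Cp + 1)) ≤ δ * C' := mul_le_mul_of_nonneg_left h2 hδ.le
      have e4 : δ * ε ≤ k * ε := by nlinarith
      have e5 := neg_abs_le (ySupp b f)
      have e6 := le_abs_self (ySupp b f)
      rw [abs_le]
      constructor <;> nlinarith
    have hintegral_eq : eIntegral P (fun x => fstar f (δ * g x - (-(δ * (Cp + 1)) - ySupp b f)))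
        = ((∫ x, phiF f (δ * g x - (-(δ * (Cp + 1)) - ySupp b f)) ∂P : ℝ) : EReal) := by
      have hfs_eq : (fun x : Ω => fstar f (δ * g x - (-(δ * (Cp + 1)) - ySupp b f)))
          = fun x => ((phiF f (δ * g x - (-(δ * (Cp + 1)) - ySupp b f)) : ℝ) : EReal) :=
        funext fun x => fstar_eq_coe_phi hf hfa _
      rw [hfs_eq]
      exact eIntegral_coe_eq P hm2 hbd2
    have hint_g : Integrable g P := integrable_of_bound P hg hC
    have hint_m2 : Integrable (fun x => phiF f (δ * g x - (-(δ * (Cp + 1)) - ySupp b f))) P :=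
      integrable_of_bound P hm2 hbd2
    have hint_rhs : Integrable (fun x => ySupp b f + δ * (g x + (Cp + 1)) + δ * ε) P := by
      apply Integrable.add _ (integrable_const _)
      exact (integrable_const _).add ((hint_g.add (integrable_const _)).const_mul δ)
    have hmono : (∫ x, phiF f (δ * g x - (-(δ * (Cp + 1)) - ySupp b f)) ∂P)
        ≤ ∫ x, (ySupp b f + δ * (g x + (Cp + 1)) + δ * ε) ∂P :=
      integral_mono hint_m2 hint_rhs hptw_ub
    have hRHS : (∫ x, (ySupp b f + δ * (g x + (Cp + 1)) + δ * ε) ∂P)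
        = ySupp b f + δ * ((∫ x, g x ∂P) + (Cp + 1)) + δ * ε := by
      have hfun : (fun x => ySupp b f + δ * (g x + (Cp + 1)) + δ * ε)
          = fun x => δ * g x + (ySupp b f + δ * (Cp + 1) + δ * ε) := funext fun x => by ring
      rw [hfun, integral_add (hint_g.const_mul δ) (integrable_const _), integral_const_mul,
        integral_const]
      simp [measure_univ]
      ring
    calc LambdaF f P (fun x => δ * g x)
        ≤ ((-(δ * (Cp + 1)) - ySupp b f : ℝ) : EReal)
            + eIntegral P (fun x => fstar f (δ * g x - (-(δ * (Cp + 1)) - ySupp b f))) :=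
          iInf_le _ (-(δ * (Cp + 1)) - ySupp b f)
      _ = (((-(δ * (Cp + 1)) - ySupp b f)
            + (∫ x, phiF f (δ * g x - (-(δ * (Cp + 1)) - ySupp b f)) ∂P) : ℝ) : EReal) := by
          rw [hintegral_eq, ← EReal.coe_add]
      _ ≤ ((δ * ((∫ x, g x ∂P) + ε) : ℝ) : EReal) := by
          rw [EReal.coe_le_coe_iff]
          have h := hmono
          rw [hRHS] at h
          linarith
end Lambda

def termD {S : Type*} [MeasurableSpace S] (f : ℝ → EReal) (Q P : Measure S) (δ : ℝ)
    (g : S → ℝ) : EReal :=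
  (((∫ x, δ * g x ∂Q : ℝ)) : EReal) - LambdaF f P (fun x => δ * g x)

set_option maxHeartbeats 2000000 in

end

set_option maxHeartbeats 2000000 in
/-- For admissible and strictly admissible `f` and admissible `Γ`, with
`Γ_δ = {δ·g : g ∈ Γ}`: `lim_{δ↓0} (1/δ)·D_f^{Γ_δ}(Q‖P) = W^Γ(Q,P)`. -/
theorem stmt13 {S : Type*} [MetricSpace S] [CompleteSpace S]
    [TopologicalSpace.SeparableSpace S] [MeasurableSpace S] [BorelSpace S]
    (a b : EReal) (f : ℝ → EReal) (hf : IsF1 a b f) (hfa : AdmissibleF f)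
    (hfs : StrictlyConvexAtOne f)
    (Γ : Set (S → ℝ)) (hΓ : AdmissibleGamma Γ)
    (Q P : Measure S) [IsProbabilityMeasure Q] [IsProbabilityMeasure P] :
    Filter.Tendsto
      (fun δ : ℝ => (((1 / δ : ℝ)) : EReal)
        * fGammaDiv f ((fun (g : S → ℝ) => fun x => δ * g x) '' Γ) Q P)
      (𝓝[>] (0 : ℝ)) (𝓝 (ipmW Γ Q P)) := by
  have himg : ∀ δ : ℝ, fGammaDiv f ((fun (g : S → ℝ) => fun x => δ * g x) '' Γ) Q P
      = ⨆ g ∈ Γ, termD f Q P δ g := by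
    intro δ
    rw [fGammaDiv, iSup_image]
    rfl
  rw [tendsto_order]
  constructor
  · -- ∀ c < W, eventually c < value
    intro c hc
    rw [ipmW] at hc
    rw [lt_iSup_iff] at hc
    obtain ⟨g, hcg⟩ := hc
    rw [lt_iSup_iff] at hcg
    obtain ⟨hgΓ, hcg⟩ := hcg
    obtain ⟨hgcont, Cg, hgC⟩ := hΓ.2.2.1 hgΓ
    have hgmeas : Measurable g := hgcont.measurable
    have hcoesub : (((∫ x, g x ∂Q : ℝ) : EReal) - ((∫ x, g x ∂P : ℝ) : EReal))
        = (((∫ x, g x ∂Q) - (∫ x, g x ∂P) : ℝ) : EReal) := (EReal.coe_sub _ _).symm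
    rw [hcoesub] at hcg
    obtain ⟨ε, hε0, hcε⟩ : ∃ ε : ℝ, 0 < ε ∧
        c < (((∫ x, g x ∂Q) - (∫ x, g x ∂P) - ε : ℝ) : EReal) := by
      rcases eq_or_ne c ⊥ with rfl | hbot
      · exact ⟨1, one_pos, EReal.bot_lt_coe _⟩
      · have htop : c ≠ ⊤ := ne_top_of_lt hcg
        lift c to ℝ using ⟨htop, hbot⟩ with c₀
        have h : c₀ < (∫ x, g x ∂Q) - (∫ x, g x ∂P) := by exact_mod_cast hcg
        refine ⟨((∫ x, g x ∂Q) - (∫ x, g x ∂P) - c₀) / 2, by linarith, ?_⟩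
        rw [EReal.coe_lt_coe_iff]
        linarith
    obtain ⟨δ₁, hδ₁, hcore⟩ := core_estimate hf hfa P hfs hgmeas hgC hε0
    filter_upwards [Ioc_mem_nhdsGT hδ₁] with δ hδmem
    obtain ⟨hδ0, hδle⟩ := hδmem
    have hQint : ∫ x, δ * g x ∂Q = δ * ∫ x, g x ∂Q := integral_const_mul δ g
    have hterm : ((δ * ((∫ x, g x ∂Q) - (∫ x, g x ∂P) - ε) : ℝ) : EReal)
        ≤ termD f Q P δ g := by
      rw [termD]
      have h1 : LambdaF f P (fun x => δ * g x)
          ≤ ((δ * ((∫ x, g x ∂P) + ε) : ℝ) : EReal) := hcore δ hδ0 hδle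
      calc ((δ * ((∫ x, g x ∂Q) - (∫ x, g x ∂P) - ε) : ℝ) : EReal)
          = (((δ * ∫ x, g x ∂Q) - δ * ((∫ x, g x ∂P) + ε) : ℝ) : EReal) := by
            norm_cast; ring
        _ = (((δ * ∫ x, g x ∂Q : ℝ)) : EReal) - ((δ * ((∫ x, g x ∂P) + ε) : ℝ) : EReal) :=
            EReal.coe_sub _ _
        _ ≤ (((δ * ∫ x, g x ∂Q : ℝ)) : EReal) - LambdaF f P (fun x => δ * g x) :=
            EReal.sub_le_sub le_rfl h1
        _ = (((∫ x, δ * g x ∂Q : ℝ)) : EReal) - LambdaF f P (fun x => δ * g x) := by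
            rw [hQint]
    have hD : ((δ * ((∫ x, g x ∂Q) - (∫ x, g x ∂P) - ε) : ℝ) : EReal)
        ≤ fGammaDiv f ((fun (g : S → ℝ) => fun x => δ * g x) '' Γ) Q P := by
      rw [himg δ]
      exact le_trans hterm (le_biSup (termD f Q P δ) hgΓ)
    have h1δ : (0:ℝ) < 1 / δ := by positivity
    calc c < (((∫ x, g x ∂Q) - (∫ x, g x ∂P) - ε : ℝ) : EReal) := hcε
      _ = ((1 / δ : ℝ) : EReal) * ((δ * ((∫ x, g x ∂Q) - (∫ x, g x ∂P) - ε) : ℝ) : EReal) := by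
          rw [← EReal.coe_mul, EReal.coe_eq_coe_iff]
          field_simp
      _ ≤ ((1 / δ : ℝ) : EReal)
            * fGammaDiv f ((fun (g : S → ℝ) => fun x => δ * g x) '' Γ) Q P :=
          mul_le_mul_of_nonneg_left hD (by exact_mod_cast h1δ.le)
  · -- ∀ c > W, eventually value < c
    intro c hc
    filter_upwards [self_mem_nhdsWithin] with δ hδ0'
    have hδ0 : (0:ℝ) < δ := hδ0'
    refine lt_of_le_of_lt ?_ hc
    have hDW : fGammaDiv f ((fun (g : S → ℝ) => fun x => δ * g x) '' Γ) Q P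
        ≤ ((δ : ℝ) : EReal) * ipmW Γ Q P := by
      rw [himg δ]
      refine iSup₂_le fun g hgΓ => ?_
      rw [termD]
      obtain ⟨hgcont, Cg, hgC⟩ := hΓ.2.2.1 hgΓ
      have hgmeas : Measurable g := hgcont.measurable
      have hQint : ∫ x, δ * g x ∂Q = δ * ∫ x, g x ∂Q := integral_const_mul δ g
      have hPint : ∫ x, δ * g x ∂P = δ * ∫ x, g x ∂P := integral_const_mul δ g
      have hδgC : ∀ x, |δ * g x| ≤ δ * Cg := fun x => by
        rw [abs_mul, abs_of_pos hδ0]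
        exact mul_le_mul_of_nonneg_left (hgC x) hδ0.le
      have hlam : (((∫ x, δ * g x ∂P : ℝ)) : EReal) ≤ LambdaF f P (fun x => δ * g x) :=
        lambda_ge hf hfa P (hgmeas.const_mul δ) hδgC
      have hW : (((∫ x, g x ∂Q) - (∫ x, g x ∂P) : ℝ) : EReal) ≤ ipmW Γ Q P := by
        rw [EReal.coe_sub]
        exact le_biSup
          (fun g => (((∫ x, g x ∂Q : ℝ)) : EReal) - ((∫ x, g x ∂P : ℝ) : EReal)) hgΓ
      calc (((∫ x, δ * g x ∂Q : ℝ)) : EReal) - LambdaF f P (fun x => δ * g x)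
          ≤ (((∫ x, δ * g x ∂Q : ℝ)) : EReal) - (((∫ x, δ * g x ∂P : ℝ)) : EReal) :=
            EReal.sub_le_sub le_rfl hlam
        _ = ((δ * ((∫ x, g x ∂Q) - (∫ x, g x ∂P)) : ℝ) : EReal) := by
            rw [hQint, hPint, ← EReal.coe_sub, EReal.coe_eq_coe_iff]; ring
        _ = ((δ : ℝ) : EReal) * (((∫ x, g x ∂Q) - (∫ x, g x ∂P) : ℝ) : EReal) :=
            EReal.coe_mul _ _
        _ ≤ ((δ : ℝ) : EReal) * ipmW Γ Q P :=
            mul_le_mul_of_nonneg_left hW (by exact_mod_cast hδ0.le)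
    calc ((1 / δ : ℝ) : EReal)
          * fGammaDiv f ((fun (g : S → ℝ) => fun x => δ * g x) '' Γ) Q P
        ≤ ((1 / δ : ℝ) : EReal) * (((δ : ℝ) : EReal) * ipmW Γ Q P) :=
          mul_le_mul_of_nonneg_left hDW (by
            have : (0:ℝ) ≤ 1/δ := by positivity
            exact_mod_cast this)
      _ = (((1 / δ) * δ : ℝ) : EReal) * ipmW Γ Q P := by
          rw [← mul_assoc, ← EReal.coe_mul]
      _ = ipmW Γ Q P := by
          rw [one_div, inv_mul_cancel₀ hδ0.ne']
          exact one_mul _
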